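/- Let ε > 0, λ > 0, and let f : [0,∞) × [0,∞) → [0,∞) be continuous, C¹ in t, with f(·,t) integrable on (0,∞) for every t, and such that t ↦ ∫₀^∞ f(v,t) dv can be differentiated under the integral sign. If f satisfies the ε-BDY equation pointwise, then d/dt ∫₀^∞ f(v,t) dv = 0 for all t ≥ 0; i.e. the ε-BDY dynamics conserves the total probability mass. -/

import Mathlib

open MeasureTheory Set Filter

lemma shift_integral (g : ℝ → ℝ) (a c : ℝ) :
    ∫ v in Ioi a, g (v + c) = ∫ v in Ioi (a + c), g v := by
  have hpre : (fun x : ℝ => x + c) ⁻¹' Ioi (a + c) = Ioi a := by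
    ext x; simp
  have := (measurePreserving_add_right (volume : Measure ℝ) c).setIntegral_preimage_emb
    (MeasurableEquiv.addRight c).measurableEmbedding g (Ioi (a + c))
  rw [hpre] at this
  exact this

lemma shift_integrableOn {g : ℝ → ℝ} {a : ℝ} (c : ℝ) (h : IntegrableOn g (Ioi (a + c))) :
    IntegrableOn (fun v => g (v + c)) (Ioi a) := by
  have hpre : (fun x : ℝ => x + c) ⁻¹' Ioi (a + c) = Ioi a := by
    ext x; simp
  have := ((measurePreserving_add_right (volume : Measure ℝ) c).integrableOn_comp_preimage
    (MeasurableEquiv.addRight c).measurableEmbedding).mpr h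
  rwa [hpre] at this

set_option maxHeartbeats 1000000 in
theorem epsilon_BDY_mass_conservation
    (ε lam : ℝ) (hε : 0 < ε) (hlam : 0 < lam)
    (f ft : ℝ → ℝ → ℝ)
    (hcont : ContinuousOn (fun p : ℝ × ℝ => f p.1 p.2) (Ici 0 ×ˢ Ici 0))
    (hnonneg : ∀ v t : ℝ, 0 ≤ v → 0 ≤ t → 0 ≤ f v t)
    (hderiv_t : ∀ v t : ℝ, 0 ≤ v → 0 ≤ t → HasDerivAt (fun s => f v s) (ft v t) t)
    (hint : ∀ t : ℝ, 0 ≤ t → IntegrableOn (fun v => f v t) (Ioi 0))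
    (hint_ft : ∀ t : ℝ, 0 ≤ t → IntegrableOn (fun v => ft v t) (Ioi 0))
    (hDUI : ∀ t : ℝ, 0 ≤ t →
      HasDerivAt (fun s => ∫ v in Ioi (0:ℝ), f v s) (∫ v in Ioi (0:ℝ), ft v t) t)
    (hPDE : ∀ v t : ℝ, 0 ≤ v → 0 ≤ t →
      ft v t = lam / 2 *
        (f (v + ε) t - (∫ w in Ioi ε, f w t) * f v t +
          ((∫ w in Ioi ε, f w t) * f (v - ε) t - f v t) * (if ε ≤ v then 1 else 0))) :
    ∀ t : ℝ, 0 ≤ t → deriv (fun s => ∫ v in Ioi (0:ℝ), f v s) t = 0 := by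
  intro t ht
  rw [(hDUI t ht).deriv]
  set r : ℝ := ∫ w in Ioi ε, f w t with hr
  set M : ℝ := ∫ v in Ioi (0:ℝ), f v t with hM
  -- rewrite the integrand
  have key : ∀ v ∈ Ioi (0:ℝ), ft v t =
      lam / 2 * ((f (v + ε) t - r * f v t) +
        (Ici ε).indicator (fun w => r * f (w - ε) t - f w t) v) := by
    intro v hv
    rw [hPDE v t (le_of_lt hv) ht]
    simp only [indicator_apply, mem_Ici]
    split_ifs with h <;> ring
  rw [setIntegral_congr_fun measurableSet_Ioi key, integral_const_mul]
  -- integrability facts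
  have hfε : IntegrableOn (fun v => f v t) (Ioi ε) :=
    (hint t ht).mono_set (Ioi_subset_Ioi hε.le)
  have hA : IntegrableOn (fun v => f (v + ε) t) (Ioi 0) := by
    have := shift_integrableOn (g := fun v => f v t) (a := 0) ε (by simpa using hfε)
    exact this
  have hB : IntegrableOn (fun v => r * f v t) (Ioi 0) := (hint t ht).const_mul r
  have hshiftdown : IntegrableOn (fun w => f (w - ε) t) (Ioi ε) := by
    have h0 := shift_integrableOn (g := fun v => f v t) (a := ε) (-ε)
      (by simpa using hint t ht)
    simpa [sub_eq_add_neg] using h0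
  have hg : IntegrableOn (fun w => r * f (w - ε) t - f w t) (Ioi ε) :=
    (hshiftdown.const_mul r).sub hfε
  have hInd : IntegrableOn ((Ici ε).indicator (fun w => r * f (w - ε) t - f w t)) (Ioi 0) := by
    rw [IntegrableOn, integrable_indicator_iff measurableSet_Ici, IntegrableOn,
      Measure.restrict_restrict measurableSet_Ici]
    have : Ici ε ∩ Ioi 0 = Ici ε := inter_eq_left.mpr (fun x hx => lt_of_lt_of_le hε hx)
    rw [this]
    exact Iff.mpr integrableOn_Ici_iff_integrableOn_Ioi hg
  -- compute the integral
  have hAB : IntegrableOn (fun v => f (v + ε) t - r * f v t) (Ioi 0) := hA.sub hB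
  rw [integral_add hAB hInd, integral_sub hA hB, integral_const_mul,
    setIntegral_indicator measurableSet_Ici]
  have h1 : ∫ v in Ioi (0:ℝ), f (v + ε) t = r := by
    have := shift_integral (fun v => f v t) 0 ε
    rw [zero_add] at this
    exact this
  have h2 : Ioi (0:ℝ) ∩ Ici ε = Ici ε :=
    inter_eq_right.mpr (fun x hx => lt_of_lt_of_le hε hx)
  rw [h1, h2, ← integral_Ici_eq_integral_Ioi.symm]
  have h4 : ∫ w in Ioi ε, f (w - ε) t = M := by
    have := shift_integral (fun v => f v t) ε (-ε)
    rw [add_neg_cancel] at this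
    simpa [sub_eq_add_neg] using this
  have h3 : ∫ w in Ioi ε, (r * f (w - ε) t - f w t) = r * M - r := by
    rw [integral_sub (hshiftdown.const_mul r) hfε, integral_const_mul, h4, ← hr]
  rw [h3]
  ring
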